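/- arXiv:2512.19295 — 3 statements merged into one kernel-verified Lean document; each statement's English description precedes it below -/
import Mathlib

section
/- Let n ≥ 1 and let Δ be a finitely generated residually finite group having the same finite quotients as the torsion-free lamplighter group Γ_n = ℤ^n ≀ ℤ. Let U be a normal subgroup of Δ contained in the derived subgroup [Δ, Δ] and of finite index in [Δ, Δ], and let T = [Δ, Δ]/U be the resulting finite quotient group. Then the image of the natural homomorphism Δ → Aut(T) induced by conjugation (which is well defined since conjugation by elements of Δ preserves both [Δ, Δ] and U) is a finite cyclic group. -/
open LaurentPolynomial
open scoped commutatorElement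

/-- The base group of the torsion-free lamplighter group: the (additive group of the)
free module of rank `n` over the Laurent polynomial ring `ℤ[T,T⁻¹]`. -/
abbrev LampBase (n : ℕ) : Type := Fin n → LaurentPolynomial ℤ

/-- The shift automorphism of the base: multiplication by `T^z` in each coordinate. -/
noncomputable def lampShift (n : ℕ) (z : ℤ) : LampBase n ≃+ LampBase n where
  toFun v := fun i => T z * v i
  invFun v := fun i => T (-z) * v i
  left_inv v := by funext i; simp [← mul_assoc, ← T_add]
  right_inv v := by funext i; simp [← mul_assoc, ← T_add]
  map_add' v w := by funext i; simp [mul_add]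

/-- The action of `ℤ` on the base group, where `1` acts by multiplication by `T`
in each coordinate. -/
noncomputable def lampAction (n : ℕ) :
    Multiplicative ℤ →* MulAut (Multiplicative (LampBase n)) where
  toFun z := AddEquiv.toMultiplicative (lampShift n z.toAdd)
  map_one' := by
    refine MulEquiv.ext fun v => ?_
    show Multiplicative.ofAdd ((lampShift n (1 : Multiplicative ℤ).toAdd) v.toAdd) = v
    simp [lampShift]
  map_mul' z w := by
    refine MulEquiv.ext fun v => ?_
    show Multiplicative.ofAdd ((lampShift n (z * w).toAdd) v.toAdd)
        = Multiplicative.ofAdd ((lampShift n z.toAdd)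
            (Multiplicative.ofAdd ((lampShift n w.toAdd) v.toAdd)).toAdd)
    simp only [toAdd_mul, toAdd_ofAdd, lampShift, AddEquiv.coe_mk, Equiv.coe_fn_mk]
    congr 1
    funext i
    rw [T_add, mul_assoc]

/-- The torsion-free lamplighter group `ℤ^n ≀ ℤ`, realized as the semidirect product
of the free `ℤ[T,T⁻¹]`-module of rank `n` by `ℤ`, where `1 ∈ ℤ` acts by multiplication
by `T` in each coordinate. -/
abbrev Lamplighter (n : ℕ) : Type :=
  SemidirectProduct (Multiplicative (LampBase n)) (Multiplicative ℤ) (lampAction n)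

/-- Two groups have the same finite quotients if every finite group is a quotient of one
iff it is a quotient of the other. -/
def SameFiniteQuotients (G H : Type*) [Group G] [Group H] : Prop :=
  ∀ (Q : Type) (_ : Group Q) (_ : Finite Q),
    (∃ f : G →* Q, Function.Surjective f) ↔ (∃ f : H →* Q, Function.Surjective f)

/-- A group is residually finite if every nontrivial element is detected by a homomorphism
to some finite group. -/
def ResiduallyFinite (G : Type*) [Group G] : Prop :=
  ∀ g : G, g ≠ 1 → ∃ (Q : Type) (_ : Group Q) (_ : Finite Q) (f : G →* Q), f g ≠ 1

/-- The natural conjugation action of `Δ` on the finite quotient `T = [Δ,Δ]/U`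
(realized canonically as the derived subgroup of `Δ/U`, which is the isomorphic image
of `[Δ,Δ]/U` when `U ≤ [Δ,Δ]`): `g ∈ Δ` acts on `T` by conjugation. -/
def conjOnCommutatorQuot {Δ : Type*} [Group Δ] (U : Subgroup Δ) [U.Normal] :
    Δ →* MulAut ↥(commutator (Δ ⧸ U)) :=
  MulAut.conjNormal.comp (QuotientGroup.mk' U)

-- torsion bound in f.g. comm group
lemma torsion_bound (A : Type*) [CommGroup A] [Group.FG A] :
    ∃ e : ℕ, 0 < e ∧ ∀ a : A, IsOfFinOrder a → a ^ e = 1 := by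
  classical
  set TA := CommGroup.torsion A with hTA
  have hfg : Group.FG ↥TA := by
    rw [Group.fg_iff_subgroup_fg]
    have h1 : AddGroup.FG (Additive A) := GroupFG.iff_add_fg.mp ‹_›
    have h2 : Module.Finite ℤ (Additive A) := Module.Finite.iff_addGroup_fg.mpr h1
    have h3 : (AddSubgroup.toIntSubmodule (Subgroup.toAddSubgroup TA)).FG :=
      IsNoetherian.noetherian _
    rw [Subgroup.fg_iff_add_fg]
    have := (Submodule.fg_iff_addSubgroup_fg _).mp h3
    simpa using this
  have hfin : Finite ↥TA := CommGroup.finite_of_fg_torsion _ CommMonoid.torsion.isTorsion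
  refine ⟨Nat.card ↥TA, Nat.card_pos, fun a ha => ?_⟩
  have hmem : a ∈ TA := ha
  have : (⟨a, hmem⟩ : ↥TA) ^ Nat.card ↥TA = 1 := pow_card_eq_one'
  calc a ^ Nat.card ↥TA = ((⟨a, hmem⟩ ^ Nat.card ↥TA : ↥TA) : A) := by
        rw [SubmonoidClass.coe_pow]
    _ = 1 := by rw [this]; rfl

section PowId
variable {H : Type*} [Group H]

lemma pow_shift_aux (a b c : H) (hc : c * (a * b) = b * a)
    (hca : Commute c a) (hcb : Commute c b) :
    ∀ k : ℕ, b ^ k * a = a * b ^ k * c ^ k := by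
  have h0 : b * a = a * b * c := by
    rw [← hc, (hca.mul_right hcb).eq, mul_assoc]
  intro k
  induction k with
  | zero => simp
  | succ k ih =>
    have hcbk : Commute c (b ^ k) := hcb.pow_right k
    calc b ^ (k + 1) * a = b * (b ^ k * a) := by rw [pow_succ']; rw [mul_assoc]
      _ = b * (a * b ^ k * c ^ k) := by rw [ih]
      _ = (b * a) * (b ^ k * c ^ k) := by simp only [mul_assoc]
      _ = (a * b * c) * (b ^ k * c ^ k) := by rw [h0]
      _ = a * b ^ (k + 1) * c ^ (k + 1) := by
          rw [pow_succ' b, pow_succ' c]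
          simp only [mul_assoc]
          rw [← mul_assoc c (b ^ k) (c ^ k), hcbk.eq, mul_assoc]

lemma pow_mul_class2 (a b c : H) (hc : c * (a * b) = b * a)
    (hca : Commute c a) (hcb : Commute c b) :
    ∀ k : ℕ, (a * b) ^ k = a ^ k * b ^ k * c ^ (k.choose 2) := by
  intro k
  induction k with
  | zero => simp
  | succ k ih =>
    have hC : Commute (c ^ k.choose 2) (a * b) := ((hca.mul_right hcb).pow_left _)
    have hck : Commute (c ^ k) b := (hcb.pow_left k)
    calc (a * b) ^ (k + 1) = (a * b) ^ k * (a * b) := pow_succ _ _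
      _ = a ^ k * b ^ k * c ^ (k.choose 2) * (a * b) := by rw [ih]
      _ = a ^ k * b ^ k * (a * b) * c ^ (k.choose 2) := by
          rw [mul_assoc _ (c ^ k.choose 2) (a*b), hC.eq, ← mul_assoc]
      _ = a ^ k * (b ^ k * a) * b * c ^ (k.choose 2) := by simp only [mul_assoc]
      _ = a ^ k * (a * b ^ k * c ^ k) * b * c ^ (k.choose 2) := by
          rw [pow_shift_aux a b c hc hca hcb k]
      _ = a ^ (k+1) * b ^ (k+1) * (c ^ k * c ^ (k.choose 2)) := by
          rw [pow_succ' a, pow_succ b]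
          simp only [mul_assoc]
          rw [← mul_assoc (c ^ k) b, hck.eq, mul_assoc, ← mul_assoc (a ^ k) a,
            ← pow_succ, pow_succ', mul_assoc]
      _ = a ^ (k+1) * b ^ (k+1) * c ^ ((k+1).choose 2) := by
          rw [← pow_add]
          congr 2
          rw [Nat.choose_succ_succ, Nat.choose_one_right, Nat.add_comm]
end PowId

section Helpers
variable {H : Type*} [Group H]

lemma mem_pow_card_eq_one (Z : Subgroup H) [Finite ↥Z] {z : H} (hz : z ∈ Z) :
    z ^ Nat.card ↥Z = 1 := by
  have h1 : (⟨z, hz⟩ : ↥Z) ^ Nat.card ↥Z = 1 := pow_card_eq_one'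
  calc z ^ Nat.card ↥Z = ((⟨z, hz⟩ ^ Nat.card ↥Z : ↥Z) : H) := by
        rw [SubmonoidClass.coe_pow]
    _ = 1 := by rw [h1]; rfl

lemma normal_of_central (Z : Subgroup H) (hcen : ∀ z ∈ Z, ∀ h : H, z * h = h * z) :
    Z.Normal := by
  refine ⟨fun z hz g => ?_⟩
  have : g * z * g⁻¹ = z := by rw [← hcen z hz g, mul_inv_cancel_right]
  rwa [this]

lemma comm_quot (Z : Subgroup H) [Z.Normal] (hcomm : ∀ a b : H, ⁅a, b⁆ ∈ Z) :
    ∀ x y : H ⧸ Z, x * y = y * x := by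
  intro x y
  induction x using QuotientGroup.induction_on with | H a =>
  induction y using QuotientGroup.induction_on with | H b =>
  show ((a * b : H) : H ⧸ Z) = ((b * a : H) : H ⧸ Z)
  rw [QuotientGroup.eq]
  have : (a * b)⁻¹ * (b * a) = ⁅b⁻¹, a⁻¹⁆ := by
    rw [commutatorElement_def]; group
  rw [this]
  exact hcomm _ _

end Helpers

section NilSep
variable {H : Type*} [Group H]

lemma nil_sep [Group.FG H] (Z : Subgroup H) [Finite ↥Z]
    (hcen : ∀ z ∈ Z, ∀ h : H, z * h = h * z)
    (hcomm : ∀ a b : H, ⁅a, b⁆ ∈ Z) :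
    ∃ K : Subgroup H, K.Normal ∧ K.FiniteIndex ∧ K ⊓ Z = ⊥ := by
  classical
  haveI hZn : Z.Normal := normal_of_central Z hcen
  set m := Nat.card ↥Z with hm
  have hmpos : 0 < m := Nat.card_pos
  -- torsion bound in H ⧸ Z
  letI : CommGroup (H ⧸ Z) :=
    { (inferInstance : Group (H ⧸ Z)) with mul_comm := comm_quot Z hcomm }
  obtain ⟨e, hepos, hebound⟩ := torsion_bound (H ⧸ Z)
  -- the exponent r
  set r := 2 * (m * (e * m)) with hr
  have hrpos : 0 < r := by positivity
  have hdvd_em_r : e * m ∣ r := ⟨2 * m, by ring⟩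
  have hdvd_m_choose : m ∣ r.choose 2 := by
    rw [Nat.choose_two_right, hr]
    have h2 : 2 * (m * (e * m)) * (2 * (m * (e * m)) - 1) = 2 * (m * (e * m) * (2 * (m * (e * m)) - 1)) := by ring
    rw [h2, Nat.mul_div_cancel_left _ (by norm_num : 0 < 2)]
    exact ⟨e * m * (2 * (m * (e * m)) - 1), by ring⟩
  -- torsion elements of H have order dividing e * m
  have htor : ∀ h : H, IsOfFinOrder h → h ^ (e * m) = 1 := by
    intro h hh
    have h1 : ((h : H ⧸ Z)) ^ e = 1 := hebound _ ((QuotientGroup.mk' Z).isOfFinOrder hh)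
    have h2 : h ^ e ∈ Z := by
      rw [← QuotientGroup.eq_one_iff (h ^ e)]
      simpa using h1
    rw [pow_mul]
    exact mem_pow_card_eq_one Z h2
  -- the power map is a homomorphism
  have hhom : ∀ a b : H, (a * b) ^ r = a ^ r * b ^ r := by
    intro a b
    have hc : ⁅b, a⁆ * (a * b) = b * a := by rw [commutatorElement_def]; group
    have hca : Commute ⁅b, a⁆ a := hcen _ (hcomm b a) a
    have hcb : Commute ⁅b, a⁆ b := hcen _ (hcomm b a) b
    obtain ⟨d, hd⟩ := hdvd_m_choose
    have : ⁅b, a⁆ ^ r.choose 2 = 1 := by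
      rw [hd, pow_mul, mem_pow_card_eq_one Z (hcomm b a), one_pow]
    rw [pow_mul_class2 a b ⁅b, a⁆ hc hca hcb r, this, mul_one]
  let φr : H →* H := { toFun := fun h => h ^ r, map_one' := one_pow r, map_mul' := hhom }
  refine ⟨φr.range, ?_, ?_, ?_⟩
  · refine ⟨?_⟩
    rintro x ⟨h, rfl⟩ g
    exact ⟨g * h * g⁻¹, by simp [φr, conj_pow]⟩
  · -- finite index
    haveI hKn : (φr.range).Normal := by
      refine ⟨?_⟩
      rintro x ⟨h, rfl⟩ g
      exact ⟨g * h * g⁻¹, by simp [φr, conj_pow]⟩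
    have hx : ∀ x : H ⧸ φr.range, x ^ r = 1 := by
      intro x
      induction x using QuotientGroup.induction_on with | H h =>
      show ((h ^ r : H) : H ⧸ φr.range) = 1
      rw [QuotientGroup.eq_one_iff]
      exact ⟨h, rfl⟩
    set Q2 := H ⧸ φr.range
    set Z2 := Z.map (QuotientGroup.mk' φr.range) with hZ2
    have hZ2fin : Finite ↥Z2 := by
      have : ((Z2 : Set Q2)).Finite := by
        rw [hZ2, Subgroup.coe_map]
        exact (Set.toFinite (Z : Set H)).image _
      exact this.to_subtype
    have hcen2 : ∀ z ∈ Z2, ∀ q : Q2, z * q = q * z := by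
      rintro z ⟨z0, hz0, rfl⟩ q
      induction q using QuotientGroup.induction_on with | H h =>
      show ((z0 * h : H) : Q2) = ((h * z0 : H) : Q2)
      rw [hcen z0 hz0 h]
    have hcomm2 : ∀ x y : Q2, ⁅x, y⁆ ∈ Z2 := by
      intro x y
      induction x using QuotientGroup.induction_on with | H a =>
      induction y using QuotientGroup.induction_on with | H b =>
      have : ⁅((a : H) : Q2), ((b : H) : Q2)⁆ = ((⁅a, b⁆ : H) : Q2) := by
        rw [commutatorElement_def, commutatorElement_def]; rfl
      rw [this]
      exact ⟨⁅a, b⁆, hcomm a b, rfl⟩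
    haveI hZ2n : Z2.Normal := normal_of_central Z2 hcen2
    letI : CommGroup (Q2 ⧸ Z2) :=
      { (inferInstance : Group (Q2 ⧸ Z2)) with mul_comm := comm_quot Z2 hcomm2 }
    have hQ3tor : Monoid.IsTorsion (Q2 ⧸ Z2) := by
      intro x
      refine isOfFinOrder_iff_pow_eq_one.mpr ⟨r, hrpos, ?_⟩
      induction x using QuotientGroup.induction_on with | H q =>
      show ((q ^ r : Q2) : Q2 ⧸ Z2) = 1
      rw [hx q]
      rfl
    have hQ3fin : Finite (Q2 ⧸ Z2) := CommGroup.finite_of_fg_torsion _ hQ3tor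
    have hQ2fin : Finite Q2 :=
      Finite.of_equiv _ (Subgroup.groupEquivQuotientProdSubgroup (s := Z2)).symm
    exact ⟨Subgroup.index_ne_zero_of_finite⟩
  · -- trivial intersection with Z
    rw [eq_bot_iff]
    rintro x ⟨⟨h, rfl⟩, hxZ⟩
    have h1 : (h ^ r) ^ m = 1 := mem_pow_card_eq_one Z hxZ
    have h2 : IsOfFinOrder h := by
      refine isOfFinOrder_iff_pow_eq_one.mpr ⟨r * m, by positivity, ?_⟩
      rw [pow_mul]; exact h1
    have h3 : h ^ (e * m) = 1 := htor h h2
    obtain ⟨d, hd⟩ := hdvd_em_r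
    show (h ^ r : H) ∈ (⊥ : Subgroup H)
    rw [hd, pow_mul, h3, one_pow]
    exact Subgroup.mem_bot.mpr rfl
end NilSep

section Sep
variable {G : Type*} [Group G]

lemma finite_mulAut (X : Type*) [Group X] [Finite X] : Finite (MulAut X) :=
  Finite.of_injective (fun (f : MulAut X) => (f : X → X))
    (fun f g h => by ext x; exact congrFun h x)

lemma map_commutator_of_surjective {G₁ H₁ : Type*} [Group G₁] [Group H₁] (f : G₁ →* H₁)
    (hf : Function.Surjective f) : commutator H₁ = (commutator G₁).map f := by
  rw [commutator_def, commutator_def, Subgroup.map_commutator,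
    Subgroup.map_top_of_surjective _ hf]

lemma sep' [Group.FG G] [Finite ↥(commutator G)] :
    ∃ N : Subgroup G, N.Normal ∧ N.FiniteIndex ∧ N ⊓ commutator G ≤ ⊥ := by
  classical
  set M := commutator G with hM
  haveI : Finite (MulAut ↥M) := finite_mulAut _
  set ρ : G →* MulAut ↥M := MulAut.conjNormal with hρ
  set C := ρ.ker with hC
  haveI hCfi : C.FiniteIndex := inferInstance
  haveI hCfg : Group.FG ↥C := inferInstance
  set Z := M.subgroupOf C with hZ
  haveI hZfin : Finite ↥Z := by
    refine Finite.of_injective (fun z => (⟨z.1.1, z.2⟩ : ↥M)) ?_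
    intro a b h
    simp only [Subtype.mk.injEq] at h
    exact Subtype.ext (Subtype.ext (by have := congrArg Subtype.val h; exact this))
  have hcen : ∀ z ∈ Z, ∀ h : ↥C, z * h = h * z := by
    intro z hz h
    have h1 : ρ h.1 = 1 := h.2
    have h2 : (MulAut.conjNormal h.1 : MulAut ↥M) (⟨z.1, hz⟩ : ↥M) = ⟨z.1, hz⟩ := by
      rw [show (MulAut.conjNormal h.1 : MulAut ↥M) = 1 from h1]; rfl
    have h3 : h.1 * z.1 * h.1⁻¹ = z.1 := congrArg Subtype.val h2
    apply Subtype.ext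
    show z.1 * h.1 = h.1 * z.1
    have h4 : z.1 * h.1 = (h.1 * z.1 * h.1⁻¹) * h.1 := by rw [h3]
    rw [h4, inv_mul_cancel_right]
  have hcomm : ∀ a b : ↥C, ⁅a, b⁆ ∈ Z := by
    intro a b
    have : (⁅a, b⁆ : ↥C).1 = ⁅a.1, b.1⁆ := rfl
    rw [hZ, Subgroup.mem_subgroupOf, this, hM, commutator_def]
    exact Subgroup.commutator_mem_commutator (Subgroup.mem_top _) (Subgroup.mem_top _)
  obtain ⟨K, _, hKfi, hKZ⟩ := nil_sep Z hcen hcomm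
  set K' := K.map C.subtype with hK'
  haveI hK'fi : K'.FiniteIndex := by
    refine ⟨?_⟩
    rw [hK', Subgroup.index_map_subtype]
    exact Nat.mul_ne_zero hKfi.index_ne_zero hCfi.index_ne_zero
  refine ⟨K'.normalCore, inferInstance, inferInstance, ?_⟩
  rintro x ⟨hxN, hxM⟩
  have hxK' : x ∈ K' := K'.normalCore_le hxN
  obtain ⟨k, hk, hkx⟩ := hxK'
  have hkZ : k ∈ Z := by rw [hZ, Subgroup.mem_subgroupOf]; rw [← hkx] at hxM; exact hxM
  have : k ∈ K ⊓ Z := ⟨hk, hkZ⟩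
  rw [hKZ] at this
  rw [← hkx, Subgroup.mem_bot.mp this]
  exact Subgroup.mem_bot.mpr rfl
end Sep

section Lamp
open SemidirectProduct

lemma lamp_ker_comm (n : ℕ) (x y : Lamplighter n)
    (hx : x ∈ (rightHom : Lamplighter n →* Multiplicative ℤ).ker)
    (hy : y ∈ (rightHom : Lamplighter n →* Multiplicative ℤ).ker) : x * y = y * x := by
  have hx1 : x.right = 1 := hx
  have hy1 : y.right = 1 := hy
  apply SemidirectProduct.ext
  · show (x * y).left = (y * x).left
    rw [mul_left, mul_left, hx1, hy1, map_one]
    simp [mul_comm]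
  · show (x * y).right = (y * x).right
    rw [mul_right, mul_right, hx1, hy1]

lemma lamp_decomp (n : ℕ) (γ : Lamplighter n) :
    ∃ b ∈ (rightHom : Lamplighter n →* Multiplicative ℤ).ker,
      γ = b * (inr (Multiplicative.ofAdd 1)) ^ (γ.right.toAdd) := by
  refine ⟨inl γ.left, by simp [MonoidHom.mem_ker], ?_⟩
  have h1 : (inr (Multiplicative.ofAdd 1) : Lamplighter n) ^ (γ.right.toAdd)
      = inr γ.right := by
    rw [← map_zpow]
    congr 1
    rw [← ofAdd_zsmul]
    simp
  rw [h1, inl_left_mul_inr_right]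

end Lamp

/-- If `Δ` is a finitely generated residually finite group with the same finite quotients
as `Γ_n = ℤ^n ≀ ℤ`, `U ⊴ Δ` is contained in `[Δ,Δ]` with finite index in `[Δ,Δ]`, and
`T = [Δ,Δ]/U`, then the image of the natural conjugation map `Δ → Aut(T)` is a finite
cyclic group. -/
theorem conj_image_on_commutator_quot_cyclic
    (n : ℕ) (hn : 1 ≤ n) (Δ : Type) [Group Δ] [Group.FG Δ]
    (hres : ResiduallyFinite Δ) (hfq : SameFiniteQuotients Δ (Lamplighter n))
    (U : Subgroup Δ) [U.Normal] (hUle : U ≤ commutator Δ)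
    (hUfin : (U.subgroupOf (commutator Δ)).FiniteIndex) :
    Finite (conjOnCommutatorQuot U).range ∧ IsCyclic (conjOnCommutatorQuot U).range := by
  classical
  set G := Δ ⧸ U with hG
  set mkU := QuotientGroup.mk' U with hmkU
  set M := commutator Δ with hM
  have hmkUsurj : Function.Surjective mkU := QuotientGroup.mk'_surjective U
  have hcommG_map : commutator G = Subgroup.map mkU M :=
    map_commutator_of_surjective mkU hmkUsurj
  -- T = commutator G is finite
  haveI hTfin : Finite ↥(commutator G) := by
    rw [hcommG_map]
    have hker : ∀ u ∈ U.subgroupOf M, (mkU.subgroupMap M) u = 1 := by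
      intro u hu
      apply Subtype.ext
      show mkU u.1 = 1
      rw [hmkU]
      exact (QuotientGroup.eq_one_iff _).mpr hu
    have hfinq : Finite (↥M ⧸ U.subgroupOf M) := by
      have h1 : (U.subgroupOf M).index ≠ 0 := hUfin.index_ne_zero
      rw [Subgroup.index_eq_card] at h1
      exact (Nat.card_ne_zero.mp h1).2
    refine Finite.of_surjective (QuotientGroup.lift (U.subgroupOf M) (mkU.subgroupMap M) hker) ?_
    intro y
    obtain ⟨x, hx⟩ := mkU.subgroupMap_surjective M y
    exact ⟨QuotientGroup.mk x, hx⟩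
  haveI hMAfin : Finite (MulAut ↥(commutator G)) := finite_mulAut _
  constructor
  · exact Set.toFinite _
  -- separation
  obtain ⟨Nb, hNbn, hNbfi, hNbM⟩ := sep' (G := G)
  set N := Nb.comap mkU with hN
  haveI hNn : N.Normal := Subgroup.Normal.comap hNbn mkU
  have hNfi : N.index ≠ 0 := by
    rw [hN, Subgroup.index_comap_of_surjective _ hmkUsurj]
    exact hNbfi.index_ne_zero
  haveI hQfin : Finite (Δ ⧸ N) := by
    have := hNfi
    rw [Subgroup.index_eq_card] at this
    exact (Nat.card_ne_zero.mp this).2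
  set q := QuotientGroup.mk' N with hq
  have hqsurj : Function.Surjective q := QuotientGroup.mk'_surjective N
  obtain ⟨g, hgsurj⟩ := (hfq (Δ ⧸ N) inferInstance inferInstance).mp ⟨q, hqsurj⟩
  set A := (SemidirectProduct.rightHom :
      Lamplighter n →* Multiplicative ℤ).ker.map g with hA
  have hAcomm : ∀ x ∈ A, ∀ y ∈ A, x * y = y * x := by
    rintro x ⟨x0, hx0, rfl⟩ y ⟨y0, hy0, rfl⟩
    rw [← map_mul, ← map_mul, lamp_ker_comm n x0 y0 hx0 hy0]
  have hcommQ : commutator (Δ ⧸ N) ≤ A := by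
    have h1 : commutator (Δ ⧸ N) = Subgroup.map g (commutator (Lamplighter n)) :=
      map_commutator_of_surjective g hgsurj
    rw [h1, hA]
    exact Subgroup.map_mono (Abelianization.commutator_subset_ker _)
  have hcommQ_eq : commutator (Δ ⧸ N) = Subgroup.map q M :=
    map_commutator_of_surjective q hqsurj
  set φ := conjOnCommutatorQuot U with hφ
  -- key step
  have hkey : ∀ δ : Δ, q δ ∈ A → φ δ = 1 := by
    intro δ hδ
    apply MulEquiv.ext
    intro t
    apply Subtype.ext
    have ht : t.1 ∈ Subgroup.map mkU M := by rw [← hcommG_map]; exact t.2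
    obtain ⟨m, hm, hmt⟩ := ht
    have hqm : q m ∈ A := hcommQ (by rw [hcommQ_eq]; exact Subgroup.mem_map_of_mem q hm)
    have hc1 : q ⁅δ, m⁆ = 1 := by
      rw [map_commutatorElement]
      rw [commutatorElement_eq_one_iff_mul_comm]
      exact hAcomm _ hδ _ hqm
    have hcN : ⁅δ, m⁆ ∈ N := by
      have := (QuotientGroup.eq_one_iff (⁅δ, m⁆ : Δ)).mp hc1
      exact this
    have hcM : ⁅δ, m⁆ ∈ M := by
      rw [hM, commutator_def]
      exact Subgroup.commutator_mem_commutator (Subgroup.mem_top _) (Subgroup.mem_top _)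
    have hbot : mkU ⁅δ, m⁆ = 1 := by
      have h1 : mkU ⁅δ, m⁆ ∈ Nb := hcN
      have h2 : mkU ⁅δ, m⁆ ∈ commutator G := by
        rw [hcommG_map]; exact Subgroup.mem_map_of_mem mkU hcM
      exact Subgroup.mem_bot.mp (hNbM ⟨h1, h2⟩)
    have hconj : mkU δ * mkU m * (mkU δ)⁻¹ = mkU m := by
      rw [map_commutatorElement, commutatorElement_def] at hbot
      have := mul_eq_one_iff_eq_inv.mp hbot
      rw [this]
      group
    show mkU δ * t.1 * (mkU δ)⁻¹ = t.1
    rw [← hmt]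
    exact hconj
  -- generator
  obtain ⟨σ, hσ⟩ := hqsurj (g (SemidirectProduct.inr (Multiplicative.ofAdd 1)))
  refine ⟨⟨⟨φ σ, σ, rfl⟩, ?_⟩⟩
  rintro ⟨x, δ, rfl⟩
  obtain ⟨γ, hγ⟩ := hgsurj (q δ)
  obtain ⟨b, hb, hγdec⟩ := lamp_decomp n γ
  set z := Multiplicative.toAdd γ.right with hz
  have hqA : q (δ * σ ^ (-z)) ∈ A := by
    have h1 : q (δ * σ ^ (-z)) = q δ * (q σ) ^ (-z) := by
      rw [map_mul, map_zpow]
    rw [h1, hσ, ← hγ, hγdec]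
    have h2 : g (b * SemidirectProduct.inr (Multiplicative.ofAdd 1) ^ z) *
        g (SemidirectProduct.inr (Multiplicative.ofAdd 1)) ^ (-z) = g b := by
      rw [map_mul, map_zpow, mul_assoc, ← zpow_add, add_neg_cancel, zpow_zero, mul_one]
    rw [h2]
    exact Subgroup.mem_map_of_mem g hb
  have h3 : φ (δ * σ ^ (-z)) = 1 := hkey _ hqA
  have h4 : φ δ = (φ σ) ^ z := by
    rw [map_mul, map_zpow] at h3
    have := mul_eq_one_iff_eq_inv.mp h3
    rw [this, ← zpow_neg, neg_neg]
  refine ⟨z, ?_⟩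
  apply Subtype.ext
  show (φ σ) ^ z = φ δ
  rw [h4]
end

section
/- Let n ≥ 1 and let Γ_n = B ⋊ ℤ be the torsion-free lamplighter group with base subgroup B (the elements of the form (v, 0)). Then the centraliser in Γ_n of the derived subgroup [Γ_n, Γ_n] is exactly the base subgroup B. -/
open LaurentPolynomial

open scoped commutatorElement

theorem aux_T_eq_one {z : ℤ} (h : (T z : LaurentPolynomial ℤ) = 1) : z = 0 := by
  rw [← T_zero] at h
  exact AddMonoidAlgebra.single_left_injective one_ne_zero h

/-- In the torsion-free lamplighter group `Γ_n = B ⋊ ℤ`, the centraliser of the derived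
subgroup `[Γ_n, Γ_n]` is exactly the base subgroup `B` (the range of the canonical
inclusion of the base). -/
theorem centralizer_commutator_lamplighter (n : ℕ) (hn : 1 ≤ n) :
    Subgroup.centralizer (commutator (Lamplighter n) : Set (Lamplighter n)) =
      (SemidirectProduct.inl :
        Multiplicative (LampBase n) →* Lamplighter n).range := by
  apply le_antisymm
  · intro g hg
    -- the commutator ⁅inl u, inr 1⁆ where u = e₀
    set i0 : Fin n := ⟨0, hn⟩ with hi0
    set u : Multiplicative (LampBase n) :=
      Multiplicative.ofAdd (Pi.single i0 (1 : LaurentPolynomial ℤ)) with hu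
    set m : Multiplicative (LampBase n) :=
      u * (lampAction n (Multiplicative.ofAdd 1)) u⁻¹ with hm
    have hc : (SemidirectProduct.inl m : Lamplighter n) ∈ commutator (Lamplighter n) := by
      have h1 : (SemidirectProduct.inl m : Lamplighter n)
          = ⁅(SemidirectProduct.inl u : Lamplighter n),
              SemidirectProduct.inr (Multiplicative.ofAdd (1 : ℤ))⁆ := by
        rw [commutatorElement_def]
        ext <;> simp [hm]
      rw [commutator_def, h1]
      exact Subgroup.commutator_mem_commutator (Subgroup.mem_top _) (Subgroup.mem_top _)
    have hcomm := hg (SemidirectProduct.inl m) hc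
    have hleft := congrArg SemidirectProduct.left hcomm
    simp only [SemidirectProduct.mul_left, SemidirectProduct.left_inl,
      SemidirectProduct.right_inl, map_one, MulAut.one_apply] at hleft
    -- hleft : m * g.left = g.left * (lampAction n g.right) m
    have hme : m = (lampAction n g.right) m := by
      have := mul_comm g.left m
      rw [hleft] at this
      exact mul_left_cancel this
    -- evaluate at coordinate i0
    have hco := congrArg (fun w : Multiplicative (LampBase n) => w.toAdd i0) hme
    have hmval : m.toAdd i0 = 1 - T 1 := by
      simp [hm, hu, lampAction, lampShift, Pi.single_apply, sub_eq_add_neg]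
    have hact : (((lampAction n) g.right) m).toAdd i0 = T g.right.toAdd * (m.toAdd i0) := rfl
    have hz : g.right.toAdd = 0 := by
      have hco2 : (1 : LaurentPolynomial ℤ) - T 1 = T g.right.toAdd * (1 - T 1) := by
        rw [← hmval]; simpa [hact, hmval] using hco
      have h0 : (T g.right.toAdd - 1) * ((1 : LaurentPolynomial ℤ) - T 1) = 0 := by
        rw [sub_mul, one_mul, ← hco2, sub_self]
      rcases mul_eq_zero.mp h0 with h | h
      · exact aux_T_eq_one (sub_eq_zero.mp h)
      · exact absurd (aux_T_eq_one (sub_eq_zero.mp h).symm) one_ne_zero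
    have hright : g.right = 1 := by
      have : g.right = Multiplicative.ofAdd (0 : ℤ) := by
        rw [← hz]; rfl
      simpa using this
    exact ⟨g.left, by conv_rhs => rw [← SemidirectProduct.inl_left_mul_inr_right g, hright, map_one, mul_one]⟩
  · rintro g ⟨v, rfl⟩
    intro h hh
    have hker : h ∈ (SemidirectProduct.rightHom :
        Lamplighter n →* Multiplicative ℤ).ker :=
      Abelianization.commutator_subset_ker _ hh
    have hright : h.right = 1 := hker
    have hrepr : h = SemidirectProduct.inl h.left := by
      rw [← SemidirectProduct.inl_left_mul_inr_right h, hright, map_one, mul_one]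
      simp
    rw [hrepr, ← map_mul, ← map_mul, mul_comm]
end

section
/- Let n ≥ 1, let m > 2 be an integer, and let Γ(m) = (R_m)^n ⋊ C_m be the finite lamplighter group, where R_m = (ℤ/mℤ)[X]/(X^m − 1) and the generator of the cyclic group C_m of order m acts on each coordinate of (R_m)^n by multiplication by X. Then the centraliser in Γ(m) of the derived subgroup [Γ(m), Γ(m)] equals the base subgroup {(v, 0) : v ∈ (R_m)^n}. -/
/-- The ring `R_m = (ℤ/mℤ)[X]/(X^m − 1)`. -/
abbrev Rm (m : ℕ) : Type :=
  Polynomial (ZMod m) ⧸ Ideal.span {(Polynomial.X : Polynomial (ZMod m)) ^ m - 1}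

/-- The image of `X` in `R_m`, as a unit. -/
noncomputable def RmX (m : ℕ) [NeZero m] : (Rm m)ˣ where
  val := Ideal.Quotient.mk _ Polynomial.X
  inv := Ideal.Quotient.mk _ (Polynomial.X ^ (m - 1))
  val_inv := by
    have h : (Polynomial.X : Polynomial (ZMod m)) * Polynomial.X ^ (m - 1) =
        Polynomial.X ^ m - 1 + 1 := by
      rw [← pow_succ']
      rw [show m - 1 + 1 = m from by have := NeZero.pos m; omega]
      ring
    have h2 : Ideal.Quotient.mk (Ideal.span {(Polynomial.X : Polynomial (ZMod m)) ^ m - 1})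
        ((Polynomial.X : Polynomial (ZMod m)) ^ m - 1) = 0 :=
      Ideal.Quotient.eq_zero_iff_mem.mpr (Ideal.subset_span rfl)
    rw [← map_mul, h, map_add, map_one, h2, zero_add]
  inv_val := by
    have h : (Polynomial.X : Polynomial (ZMod m)) ^ (m - 1) * Polynomial.X =
        Polynomial.X ^ m - 1 + 1 := by
      rw [← pow_succ]
      rw [show m - 1 + 1 = m from by have := NeZero.pos m; omega]
      ring
    have h2 : Ideal.Quotient.mk (Ideal.span {(Polynomial.X : Polynomial (ZMod m)) ^ m - 1})
        ((Polynomial.X : Polynomial (ZMod m)) ^ m - 1) = 0 :=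
      Ideal.Quotient.eq_zero_iff_mem.mpr (Ideal.subset_span rfl)
    rw [← map_mul, h, map_add, map_one, h2, zero_add]

lemma RmX_pow_eq_one (m : ℕ) [NeZero m] : RmX m ^ m = 1 := by
  ext
  push_cast [RmX]
  rw [← map_pow, ← map_one (Ideal.Quotient.mk _), Ideal.Quotient.mk_eq_mk_iff_sub_mem]
  exact Ideal.subset_span rfl

/-- The homomorphism from the cyclic group `C_m = ZMod m` (written multiplicatively)
to a group `G`, sending the generator `1` to a given element `g` satisfying `g ^ m = 1`. -/
def zmodPowHom {G : Type*} [Group G] (m : ℕ) [NeZero m] (g : G) (hg : g ^ m = 1) :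
    Multiplicative (ZMod m) →* G where
  toFun k := g ^ (Multiplicative.toAdd k).val
  map_one' := by
    show g ^ (0 : ZMod m).val = 1
    simp
  map_mul' a b := by
    show g ^ (a.toAdd + b.toAdd).val = g ^ a.toAdd.val * g ^ b.toAdd.val
    rw [ZMod.val_add, ← pow_eq_pow_mod _ hg, pow_add]

/-- The canonical homomorphism `AddAut A →* MulAut (Multiplicative A)`. -/
def addAutToMulAut (A : Type*) [AddGroup A] : Multiplicative (AddAut A) →* MulAut (Multiplicative A) where
  toFun e := AddEquiv.toMultiplicative (Multiplicative.toAdd e)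
  map_one' := rfl
  map_mul' _ _ := rfl

/-- The action of `C_m` on `(R_m)^n` in which the generator of `C_m` acts on each
coordinate by multiplication by `X`. -/
noncomputable def finLampAction (n m : ℕ) [NeZero m] :
    Multiplicative (ZMod m) →* MulAut (Multiplicative (Fin n → Rm m)) :=
  ((addAutToMulAut (Fin n → Rm m)).comp
    (DistribMulAction.toAddAut (Rm m)ˣ (Fin n → Rm m))).comp
      (zmodPowHom m (RmX m) (RmX_pow_eq_one m))

/-- The finite lamplighter group `Γ(m) = C_m^n ≀ C_m = (R_m)^n ⋊ C_m`, where the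
generator of `C_m` acts on each coordinate of `(R_m)^n` by multiplication by `X`. -/
abbrev FinLamplighter (n m : ℕ) [NeZero m] : Type :=
  SemidirectProduct (Multiplicative (Fin n → Rm m)) (Multiplicative (ZMod m))
    (finLampAction n m)


open Polynomial in
lemma degLeOfMonicDvd {R : Type*} [CommRing R] {p q : Polynomial R} (hp : p.Monic)
    (hq : q ≠ 0) (h : p ∣ q) : p.degree ≤ q.degree := by
  obtain ⟨r, rfl⟩ := h
  have hr : r ≠ 0 := by rintro rfl; simp at hq
  rw [mul_comm, hp.degree_mul]
  exact le_add_of_nonneg_left (Polynomial.zero_le_degree_iff.mpr hr)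

open Polynomial in
lemma keyRing (m : ℕ) (hm : 2 < m) (k : ℕ) (hk : k < m)
    (h : (Ideal.Quotient.mk (Ideal.span {(X : Polynomial (ZMod m)) ^ m - 1})
        (X ^ k * (X - 1)) : Polynomial (ZMod m) ⧸ Ideal.span {(X : Polynomial (ZMod m)) ^ m - 1}) = Ideal.Quotient.mk _ (X - 1)) : k = 0 := by
  haveI : NeZero m := ⟨by omega⟩
  haveI : Fact (1 < m) := ⟨by omega⟩
  by_contra hk0
  have hk1 : 1 ≤ k := Nat.one_le_iff_ne_zero.mpr hk0
  have hdvd : ((X : Polynomial (ZMod m)) ^ m - 1) ∣ (X ^ k * (X - 1) - (X - 1)) := by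
    rw [Ideal.Quotient.mk_eq_mk_iff_sub_mem, Ideal.mem_span_singleton] at h
    exact h
  have hmono : ((X : Polynomial (ZMod m)) ^ m - 1).Monic := by
    simpa using Polynomial.monic_X_pow_sub_C (1 : ZMod m) (by omega : m ≠ 0)
  have hdm : ((X : Polynomial (ZMod m)) ^ m - 1).degree = m := by
    have := Polynomial.degree_X_pow_sub_C (R := ZMod m) (by omega : 0 < m) 1
    simpa using this
  have e1 : ¬ k = k + 1 := by omega
  have e2 : ¬ 1 = k + 1 := by omega
  have e3 : ¬ k + 1 = 0 := by omega
  rcases lt_or_eq_of_le (Nat.succ_le_of_lt hk) with hklt | hkeq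
  · -- k + 1 < m
    have hpe : (X : Polynomial (ZMod m)) ^ k * (X - 1) - (X - 1)
        = X ^ (k + 1) - X ^ k - X + 1 := by ring
    rw [hpe] at hdvd
    have hc : ((X : Polynomial (ZMod m)) ^ (k + 1) - X ^ k - X + 1).coeff (k + 1) = 1 := by
      simp [Polynomial.coeff_X_pow, Polynomial.coeff_one, Polynomial.coeff_X, e1, e2, e3, hk0]
    have hp0 : (X : Polynomial (ZMod m)) ^ (k + 1) - X ^ k - X + 1 ≠ 0 := by
      intro h0; rw [h0] at hc; simp at hc
    have hdeg : ((X : Polynomial (ZMod m)) ^ (k + 1) - X ^ k - X + 1).degree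
        ≤ ((k + 1 : ℕ) : WithBot ℕ) := by
      compute_degree!
      refine ⟨⟨?_, ?_⟩, by omega⟩
      · push_cast; exact le_rfl
      · push_cast; exact le_add_of_nonneg_right zero_le_one
    have hle := degLeOfMonicDvd hmono hp0 hdvd
    rw [hdm] at hle
    have : (m : WithBot ℕ) ≤ ((k + 1 : ℕ) : WithBot ℕ) := hle.trans hdeg
    exact absurd (Nat.cast_le.mp this) (by omega)
  · -- k + 1 = m
    have hdvd2 : ((X : Polynomial (ZMod m)) ^ m - 1) ∣ (X ^ k + X - 2) := by
      have hq : (X : Polynomial (ZMod m)) ^ k + X - 2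
          = (X ^ m - 1) - (X ^ k * (X - 1) - (X - 1)) := by
        rw [← hkeq, pow_succ]
        ring
      rw [hq]
      exact dvd_sub dvd_rfl hdvd
    have e4 : ¬ 1 = k := by omega
    obtain ⟨j, rfl⟩ : ∃ j, k = j + 1 := ⟨k - 1, by omega⟩
    have hc : ((X : Polynomial (ZMod m)) ^ (j + 1) + X - 2).coeff (j + 1) = 1 := by
      simp [Polynomial.coeff_X_pow, Polynomial.coeff_X, Polynomial.coeff_ofNat_succ, e4, show ¬ j = 0 by omega]
    have hq0 : (X : Polynomial (ZMod m)) ^ (j + 1) + X - 2 ≠ 0 := by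
      intro h0; rw [h0] at hc; simp at hc
    have hdeg : ((X : Polynomial (ZMod m)) ^ (j + 1) + X - 2).degree
        ≤ ((j + 1 : ℕ) : WithBot ℕ) := by
      compute_degree!
    have hle := degLeOfMonicDvd hmono hq0 hdvd2
    rw [hdm] at hle
    have : (m : WithBot ℕ) ≤ ((j + 1 : ℕ) : WithBot ℕ) := hle.trans hdeg
    exact absurd (Nat.cast_le.mp this) (by omega)

open scoped commutatorElement

/-- In the finite lamplighter group `Γ(m) = (R_m)^n ⋊ C_m` with `m > 2`, the centraliser
of the derived subgroup `[Γ(m), Γ(m)]` is exactly the base subgroup `(R_m)^n`. -/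

theorem centralizer_commutator_finLamplighter (n m : ℕ) (hn : 1 ≤ n) (hm : 2 < m) :
    haveI : NeZero m := ⟨by omega⟩
    Subgroup.centralizer (commutator (FinLamplighter n m) : Set (FinLamplighter n m)) =
      (SemidirectProduct.inl :
        Multiplicative (Fin n → Rm m) →* FinLamplighter n m).range := by
  haveI : NeZero m := ⟨by omega⟩
  haveI : Fact (1 < m) := ⟨by omega⟩
  apply le_antisymm
  · -- centralizer ≤ base
    intro g hg
    rw [SemidirectProduct.range_inl_eq_ker_rightHom, MonoidHom.mem_ker]
    set t : Multiplicative (ZMod m) := Multiplicative.ofAdd (1 : ZMod m) with ht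
    set a : Multiplicative (Fin n → Rm m) :=
      Multiplicative.ofAdd (fun _ => (1 : Rm m)) with ha
    set u : Multiplicative (Fin n → Rm m) := finLampAction n m t a * a⁻¹ with hu
    have hmem : ⁅(SemidirectProduct.inr t : FinLamplighter n m),
        (SemidirectProduct.inl a : FinLamplighter n m)⁆ ∈ commutator (FinLamplighter n m) :=
      Subgroup.commutator_mem_commutator (Subgroup.mem_top _) (Subgroup.mem_top _)
    have hh : ⁅(SemidirectProduct.inr t : FinLamplighter n m),
        (SemidirectProduct.inl a : FinLamplighter n m)⁆
        = (SemidirectProduct.inl u : FinLamplighter n m) := by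
      rw [hu, commutatorElement_def, map_mul, SemidirectProduct.inl_aut, map_inv, map_inv]
    have hcomm := Subgroup.mem_centralizer_iff.mp hg _ hmem
    rw [hh] at hcomm
    have h1 : u * g.left = g.left * (finLampAction n m g.right u) := by
      have := congrArg SemidirectProduct.left hcomm
      simpa [SemidirectProduct.mul_left] using this
    have h2 : finLampAction n m g.right u = u :=
      (mul_left_cancel (a := g.left) (by rw [← h1, mul_comm])).symm
    -- translate to additive / ring language
    have h3 : (RmX m ^ (Multiplicative.toAdd g.right).val) • Multiplicative.toAdd u
        = Multiplicative.toAdd u := congrArg Multiplicative.toAdd h2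
    have hu' : Multiplicative.toAdd u
        = (RmX m • (fun _ => (1 : Rm m)) : Fin n → Rm m) - (fun _ => (1 : Rm m)) := by
      rw [hu]
      show ((RmX m ^ (Multiplicative.toAdd t).val) • Multiplicative.toAdd a)
          + (- Multiplicative.toAdd a)
          = RmX m • (fun _ => (1 : Rm m)) - (fun _ => (1 : Rm m))
      rw [ht, ha]
      simp [ZMod.val_one, sub_eq_add_neg]
    set k : ℕ := (Multiplicative.toAdd g.right).val with hk
    have hklt : k < m := ZMod.val_lt _
    have h4 : (RmX m : Rm m) ^ k * ((RmX m : Rm m) * 1 - 1) = (RmX m : Rm m) * 1 - 1 := by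
      have := congrFun h3 ⟨0, hn⟩
      rw [hu'] at this
      simpa [Units.smul_def, Pi.smul_apply, Pi.sub_apply, Units.val_pow_eq_pow_val] using this
    have h5 : (Ideal.Quotient.mk (Ideal.span
          {(Polynomial.X : Polynomial (ZMod m)) ^ m - 1})
          (Polynomial.X ^ k * (Polynomial.X - 1)) : Rm m)
        = Ideal.Quotient.mk _ (Polynomial.X - 1) := by
      rw [map_mul, map_sub, map_pow, map_one]
      simpa [RmX, mul_one] using h4
    have hk0 : k = 0 := keyRing m hm k hklt h5
    have : Multiplicative.toAdd g.right = 0 := by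
      rwa [← ZMod.val_eq_zero]
    show g.right = 1
    rw [← ofAdd_toAdd g.right, this, ofAdd_zero]
  · -- base ≤ centralizer
    rintro g ⟨v, rfl⟩
    rw [Subgroup.mem_centralizer_iff]
    intro h hhmem
    have : h ∈ (SemidirectProduct.inl :
        Multiplicative (Fin n → Rm m) →* FinLamplighter n m).range := by
      rw [SemidirectProduct.range_inl_eq_ker_rightHom]
      exact Abelianization.commutator_subset_ker SemidirectProduct.rightHom hhmem
    obtain ⟨w, rfl⟩ := this
    rw [← map_mul, ← map_mul, mul_comm]
end
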